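/- Let H₁, H₂ be finite-dimensional real inner product spaces with inner products a₁ on H₁ and a₂ on H₂, and let C : H₁ → H₂ be a linear map (the discrete curl). Consider the backward Euler scheme: given E⁰ ∈ H₁, B⁰ ∈ H₂, τ > 0, define for each m: a₁((E^{m+1} − E^m)/τ, w) + σ a₁(E^{m+1}, w) − a₂(B^{m+1}, C w) = a₁(J^{m+1}, w) for all w ∈ H₁, and a₂((B^{m+1} − B^m)/τ, ψ) + a₂(ψ, C E^{m+1}) = 0 for all ψ ∈ H₂, where σ ≥ 0. Then this system has a unique solution (E^{m+1}, B^{m+1}) for every m. -/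
import Mathlib


open RealInnerProductSpace

/-- Existence and uniqueness of the backward Euler step of the fully-discrete scheme on
finite-dimensional inner product spaces `H₁` (edge) and `H₂` (face), with discrete curl
`C`, conductivity `σ ≥ 0` and time step `τ > 0`. -/
theorem stmt_11 {H₁ H₂ : Type*}
    [NormedAddCommGroup H₁] [InnerProductSpace ℝ H₁] [FiniteDimensional ℝ H₁]
    [NormedAddCommGroup H₂] [InnerProductSpace ℝ H₂] [FiniteDimensional ℝ H₂]
    (C : H₁ →ₗ[ℝ] H₂) (σ τ : ℝ) (hσ : 0 ≤ σ) (hτ : 0 < τ)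
    (E : H₁) (B : H₂) (J : H₁) :
    ∃! p : H₁ × H₂,
      (∀ w : H₁, ⟪τ⁻¹ • (p.1 - E), w⟫ + σ * ⟪p.1, w⟫ - ⟪p.2, C w⟫ = ⟪J, w⟫) ∧
      (∀ ψ : H₂, ⟪τ⁻¹ • (p.2 - B), ψ⟫ + ⟪ψ, C p.1⟫ = 0) := by
  have hτ0 : τ ≠ 0 := ne_of_gt hτ
  set A : H₂ →ₗ[ℝ] H₁ := LinearMap.adjoint C with hA
  set T : H₁ →ₗ[ℝ] H₁ := (τ⁻¹ + σ) • LinearMap.id + τ • (A ∘ₗ C) with hT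
  have hTapp : ∀ x w : H₁, ⟪T x, w⟫ = (τ⁻¹ + σ) * ⟪x, w⟫ + τ * ⟪C x, C w⟫ := by
    intro x w
    simp [hT, inner_add_left, real_inner_smul_left, LinearMap.adjoint_inner_left, hA]
  have hc : 0 < τ⁻¹ + σ := by positivity
  have hinj : Function.Injective T := by
    rw [← LinearMap.ker_eq_bot, LinearMap.ker_eq_bot']
    intro x hx
    have h0 : (0:ℝ) = (τ⁻¹ + σ) * ⟪x, x⟫ + τ * ⟪C x, C x⟫ := by
      rw [← hTapp x x, hx, inner_zero_left]
    have h1 : (0:ℝ) ≤ ⟪x, x⟫ := real_inner_self_nonneg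
    have h2 : (0:ℝ) ≤ ⟪C x, C x⟫ := real_inner_self_nonneg
    have hxx : ⟪x, x⟫ = 0 := by nlinarith
    exact inner_self_eq_zero.mp hxx
  obtain ⟨x, hx⟩ := (LinearMap.injective_iff_surjective.mp hinj) (τ⁻¹ • E + J + A B)
  have hxw : ∀ w : H₁,
      (τ⁻¹ + σ) * ⟪x, w⟫ + τ * ⟪C x, C w⟫ = τ⁻¹ * ⟪E, w⟫ + ⟪J, w⟫ + ⟪B, C w⟫ := by
    intro w
    have := congrArg (fun y => ⟪y, w⟫) hx
    simpa [hTapp, inner_add_left, real_inner_smul_left,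
      LinearMap.adjoint_inner_left, hA] using this
  refine ⟨(x, B - τ • C x), ⟨?_, ?_⟩, ?_⟩
  · intro w
    have h := hxw w
    simp only [inner_smul_left, inner_sub_left, real_inner_smul_left,
      RCLike.conj_to_real, map_smul]
    linear_combination h
  · intro ψ
    have : B - τ • C x - B = -(τ • C x) := by abel
    simp [this, real_inner_smul_left, smul_smul, inv_mul_cancel₀ hτ0,
      real_inner_comm (C x) ψ]
  · rintro ⟨q₁, q₂⟩ ⟨h1, h2⟩
    have hq2 : q₂ = B - τ • C q₁ := by
      have hv : τ⁻¹ • (q₂ - B) + C q₁ = 0 := by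
        apply ext_inner_left ℝ
        intro ψ
        have h := h2 ψ
        simp only [inner_add_right, inner_zero_right]
        rw [real_inner_comm (τ⁻¹ • (q₂ - B)) ψ]
        simpa using h
      have hv2 : q₂ - B + τ • C q₁ = 0 := by
        have := congrArg (fun v => τ • v) hv
        simpa [smul_add, smul_smul, mul_inv_cancel₀ hτ0] using this
      rw [eq_sub_iff_add_eq, ← sub_eq_zero,
        show q₂ + τ • C q₁ - B = q₂ - B + τ • C q₁ by abel]
      exact hv2
    have hq1 : T q₁ = τ⁻¹ • E + J + A B := by
      apply ext_inner_right ℝ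
      intro w
      have h := h1 w
      rw [hq2] at h
      simp only [inner_smul_left, inner_sub_left, real_inner_smul_left,
        RCLike.conj_to_real] at h
      rw [hTapp]
      simp only [inner_add_left, real_inner_smul_left, LinearMap.adjoint_inner_left, hA]
      linear_combination h
    have := hinj (hq1.trans hx.symm)
    simp [this, hq2]
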